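/- An infinite group is never finitely synchronizing. -/

import Mathlib

/-- An infinite group is never finitely synchronizing. -/
theorem infinite_group_not_finitelySynchronizing (G : Type*) [Group G] [Infinite G] :
    ¬ ∃ F : Finset G, ∀ a b : G, a * b = a ∨ a * b = b ∨ a * b ∈ F := by
  rintro ⟨F, h⟩
  obtain ⟨a, ha⟩ := exists_ne (1 : G)
  have key : ∀ b : G, b ≠ 1 → a * b ∈ F := by
    intro b hb
    rcases h a b with h1 | h1 | h1
    · exact absurd (mul_eq_left.mp h1) hb
    · exact absurd (mul_eq_right.mp h1) ha
    · exact h1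
  have hinf : ({b : G | b ≠ 1}).Infinite := by
    have : {b : G | b ≠ 1} = ({1} : Set G)ᶜ := by ext x; simp
    rw [this]
    exact (Set.finite_singleton 1).infinite_compl
  have himg : ((a * ·) '' {b : G | b ≠ 1}).Infinite :=
    hinf.image ((mul_right_injective a).injOn)
  have hsub : ((a * ·) '' {b : G | b ≠ 1}) ⊆ ↑F := by
    rintro x ⟨b, hb, rfl⟩
    exact key b hb
  exact (himg.mono hsub) F.finite_toSet
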